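/- If the signed graph Σ = (Γ, σ) admits a completely reversible proper zero-free n-edge coloring, then for every signature σ' on Γ the signed graph (Γ, σ') also admits a completely reversible proper zero-free n-edge coloring. -/

import Mathlib

open SimpleGraph

/-- The signed color set `M_n`: for `n = 2k+1` it is `{0, ±1, …, ±k}`,
and for `n = 2k` it is `{±1, …, ±k}`. -/
def Mset (n : ℕ) : Set ℤ :=
  {a : ℤ | 2 * a.natAbs ≤ n ∧ (a = 0 → Odd n)}

/-- An `n`-edge coloring of the signed graph `(G, σ)`: an assignment of colors from `Mset n`
to the incidences of `G` such that `γ(v,e) = -σ(e)·γ(w,e)` for each edge `e : vw`. -/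
structure SColoring {V : Type*} (G : SimpleGraph V) (σ : Sym2 V → ℤ) (n : ℕ) where
  col : V → Sym2 V → ℤ
  mem_colors : ∀ ⦃v w : V⦄, G.Adj v w → col v s(v, w) ∈ Mset n
  compat : ∀ ⦃v w : V⦄, G.Adj v w → col v s(v, w) = -σ s(v, w) * col w s(v, w)

namespace SColoring

variable {V : Type*} {G : SimpleGraph V} {σ : Sym2 V → ℤ} {n : ℕ}

/-- A coloring is proper if distinct edges incident to a common vertex receive
distinct colors at that vertex. -/
def Proper (c : SColoring G σ n) : Prop :=
  ∀ ⦃v w x : V⦄, G.Adj v w → G.Adj v x → w ≠ x → c.col v s(v, w) ≠ c.col v s(v, x)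

/-- A coloring is zero-free if the color `0` is never used. -/
def ZeroFree (c : SColoring G σ n) : Prop :=
  ∀ ⦃v w : V⦄, G.Adj v w → c.col v s(v, w) ≠ 0

/-- The color `a` is absent at the vertex `v` if no edge incident to `v` is
colored `a` at `v`. -/
def Absent (c : SColoring G σ n) (a : ℤ) (v : V) : Prop :=
  ∀ ⦃w : V⦄, G.Adj v w → c.col v s(v, w) ≠ a

end SColoring

/-- The magnitude graph `Σ_a`: the spanning subgraph of `G` consisting of the edges
all of whose incidences are colored `+a` or `-a`. -/
def magGraph {V : Type*} (G : SimpleGraph V) (col : V → Sym2 V → ℤ) (a : ℤ) :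
    SimpleGraph V where
  Adj v w := G.Adj v w ∧ (col v s(v, w) = a ∨ col v s(v, w) = -a) ∧
    (col w s(v, w) = a ∨ col w s(v, w) = -a)
  symm := ⟨by
    rintro v w ⟨h1, h2, h3⟩
    exact ⟨h1.symm, by rwa [Sym2.eq_swap], by rwa [Sym2.eq_swap]⟩⟩
  loopless := ⟨fun v h => G.irrefl h.1⟩

/-- A proper zero-free coloring is completely reversible iff every component of every
magnitude graph is a path, i.e. every magnitude graph is acyclic (a linear forest,
since it has maximum degree at most 2). -/
def CompletelyReversible {V : Type*} {G : SimpleGraph V} {σ : Sym2 V → ℤ} {n : ℕ}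
    (c : SColoring G σ n) : Prop :=
  ∀ a : ℤ, a ≠ 0 → (magGraph G c.col a).IsAcyclic


private lemma pm_sq {x : ℤ} (h : x = 1 ∨ x = -1) : x * x = 1 := by rcases h with h|h <;> simp [h]

private lemma pm_mul {x y : ℤ} (hx : x = 1 ∨ x = -1) (hy : y = 1 ∨ y = -1) :
    x * y = 1 ∨ x * y = -1 := by rcases hx with h|h <;> rcases hy with h'|h' <;> simp [h, h']

private lemma isAcyclic_of_le {V : Type*} {G H : SimpleGraph V} (h : H ≤ G)
    (hG : G.IsAcyclic) : H.IsAcyclic := fun _ c hc => hG (c.mapLe h) (hc.mapLe h)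

private lemma exists_sign {V : Type*} [Fintype V] (f : V → V → ℤ)
    (hsym : ∀ v w, f v w = f w v) :
    ∀ (n : ℕ) (G : SimpleGraph V), G.edgeSet.ncard = n → G.IsAcyclic →
      (∀ v w, G.Adj v w → f v w = 1 ∨ f v w = -1) →
      ∃ g : V → ℤ, (∀ v, g v = 1 ∨ g v = -1) ∧ ∀ v w, G.Adj v w → g v * g w = f v w := by
  classical
  intro n
  induction n using Nat.strong_induction_on with
  | _ n ih =>
    intro G hcard hG hf
    by_cases hE : G.edgeSet = ∅
    · refine ⟨fun _ => 1, fun v => Or.inl rfl, fun v w h => ?_⟩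
      exact absurd (G.mem_edgeSet.mpr h) (by simp [hE])
    · obtain ⟨e, he⟩ := Set.nonempty_iff_ne_empty.mpr hE
      induction e using Sym2.ind with
      | _ u v =>
        have huv : G.Adj u v := G.mem_edgeSet.mp he
        set G' := G \ fromEdgeSet {s(u, v)} with hG'def
        have hle : G' ≤ G := sdiff_le
        have hGacy' : G'.IsAcyclic := isAcyclic_of_le hle hG
        have hes : G'.edgeSet = G.edgeSet \ {s(u, v)} := by
          simp [hG'def, edgeSet_sdiff, edgeSet_fromEdgeSet, edgeSet_sdiff_sdiff_isDiag]
        have hcard' : G'.edgeSet.ncard < n := by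
          rw [← hcard, hes]
          exact Set.ncard_diff_singleton_lt_of_mem he (Set.toFinite _)
        obtain ⟨g', hg'1, hg'2⟩ := ih _ hcard' G' rfl hGacy' (fun x y h => hf x y (hle h))
        have hbridge : ¬ G'.Reachable u v :=
          isBridge_iff.mp (isAcyclic_iff_forall_adj_isBridge.mp hG huv)
        set ε := f u v * g' u * g' v with hεdef
        have hε1 : ε = 1 ∨ ε = -1 := pm_mul (pm_mul (hf u v huv) (hg'1 u)) (hg'1 v)
        have hε2 : ε * ε = 1 := pm_sq hε1
        refine ⟨fun x => if G'.Reachable v x then ε * g' x else g' x, ?_, ?_⟩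
        · intro x
          by_cases h : G'.Reachable v x
          · simpa [h] using pm_mul hε1 (hg'1 x)
          · simpa [h] using hg'1 x
        · intro x y hxy
          dsimp only
          by_cases hxe : s(x, y) = s(u, v)
          · rcases Sym2.eq_iff.mp hxe with ⟨rfl, rfl⟩ | ⟨rfl, rfl⟩
            · rw [if_neg (fun h => hbridge h.symm), if_pos (Reachable.refl y)]
              have h1 := pm_sq (hg'1 x); have h2 := pm_sq (hg'1 y)
              have : g' x * (ε * g' y) = f x y * (g' x * g' x) * (g' y * g' y) := by
                rw [hεdef]; ring
              rw [this, h1, h2, mul_one, mul_one]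
            · rw [if_pos (Reachable.refl x), if_neg (fun h => hbridge h.symm)]
              have h1 := pm_sq (hg'1 x); have h2 := pm_sq (hg'1 y)
              have : ε * g' x * g' y = f y x * (g' y * g' y) * (g' x * g' x) := by
                rw [hεdef]; ring
              rw [this, h1, h2, mul_one, mul_one, hsym]
          · have hxy' : G'.Adj x y := by
              rw [hG'def, sdiff_adj, fromEdgeSet_adj]
              exact ⟨hxy, fun hc => hxe (by simpa using hc.1)⟩
            have hr : G'.Reachable v x ↔ G'.Reachable v y :=
              ⟨fun h => h.trans hxy'.reachable, fun h => h.trans hxy'.symm.reachable⟩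
            by_cases h : G'.Reachable v x
            · rw [if_pos h, if_pos (hr.mp h)]
              have : ε * g' x * (ε * g' y) = (ε * ε) * (g' x * g' y) := by ring
              rw [this, hε2, one_mul]; exact hg'2 x y hxy'
            · rw [if_neg h, if_neg (fun h' => h (hr.mpr h'))]; exact hg'2 x y hxy'

/-- If `Σ = (Γ, σ)` admits a completely reversible proper zero-free `n`-edge coloring,
then so does `(Γ, σ')` for every signature `σ'` on `Γ`. -/
theorem completelyReversible_of_any_signature {V : Type*} [Fintype V]
    (G : SimpleGraph V) (σ σ' : Sym2 V → ℤ)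
    (hσ : ∀ e ∈ G.edgeSet, σ e = 1 ∨ σ e = -1)
    (hσ' : ∀ e ∈ G.edgeSet, σ' e = 1 ∨ σ' e = -1)
    (n : ℕ) (c : SColoring G σ n) (hc : c.Proper) (hz : c.ZeroFree)
    (hrev : CompletelyReversible c) :
    ∃ c' : SColoring G σ' n, c'.Proper ∧ c'.ZeroFree ∧ CompletelyReversible c' := by
  classical
  set f : V → V → ℤ := fun v w => σ s(v, w) * σ' s(v, w) with hfdef
  have hfsym : ∀ v w, f v w = f w v := fun v w => by
    simp only [hfdef]; rw [Sym2.eq_swap]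
  have H : ∀ a : ℤ, ∃ g : V → ℤ, (∀ v, g v = 1 ∨ g v = -1) ∧
      ∀ v w, (magGraph G c.col a).Adj v w → g v * g w = f v w := by
    intro a
    have hacy : (magGraph G c.col a).IsAcyclic := by
      by_cases ha : a = 0
      · subst ha
        have : magGraph G c.col 0 = ⊥ := by
          ext v w
          simp only [magGraph, bot_adj, iff_false]
          rintro ⟨h1, h2, -⟩
          exact hz h1 (by rcases h2 with h|h <;> simpa using h)
        rw [this]; exact isAcyclic_bot
      · exact hrev a ha
    refine exists_sign f hfsym _ _ rfl hacy ?_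
    intro v w h
    have he : s(v, w) ∈ G.edgeSet := G.mem_edgeSet.mpr h.1
    exact pm_mul (hσ _ he) (hσ' _ he)
  choose A hA1 hA2 using H
  set col' : V → Sym2 V → ℤ := fun v e => A ((c.col v e).natAbs : ℤ) v * c.col v e with hcol'
  have habs : ∀ ⦃v w : V⦄, G.Adj v w →
      (c.col v s(v, w)).natAbs = (c.col w s(v, w)).natAbs := by
    intro v w h
    have hcompat := c.compat h
    rcases hσ _ (G.mem_edgeSet.mpr h) with hs | hs <;>
      rw [hcompat, hs] <;> simp [Int.natAbs_neg]
  have hmagadj : ∀ ⦃v w : V⦄, G.Adj v w →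
      (magGraph G c.col ((c.col v s(v, w)).natAbs : ℤ)).Adj v w := by
    intro v w h
    refine ⟨h, Int.natAbs_eq _, ?_⟩
    rw [habs h]
    exact Int.natAbs_eq _
  have hA1' : ∀ (a : ℤ) (v : V), A a v ≠ 0 := by
    intro a v; rcases hA1 a v with h | h <;> simp [h]
  have hnatAbs : ∀ (a : ℤ) (v : V) (x : ℤ), (A a v * x).natAbs = x.natAbs := by
    intro a v x; rcases hA1 a v with h | h <;> simp [h, Int.natAbs_neg]
  refine ⟨⟨col', ?_, ?_⟩, ?_, ?_, ?_⟩
  · -- mem_colors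
    intro v w h
    obtain ⟨h1, h2⟩ := c.mem_colors h
    constructor
    · rw [hcol']; simpa [hnatAbs] using h1
    · intro h0
      apply h2
      have := mul_eq_zero.mp h0
      rcases this with h' | h'
      · exact absurd h' (hA1' _ _)
      · exact h'
  · -- compat
    intro v w h
    have hcompat := c.compat h
    have key := hA2 _ v w (hmagadj h)
    have hgw := pm_sq (hA1 ((c.col v s(v, w)).natAbs : ℤ) w)
    have hs2 : σ s(v, w) * σ s(v, w) = 1 := pm_sq (hσ _ (G.mem_edgeSet.mpr h))
    simp only [hcol', habs h]
    set a : ℤ := ((c.col w s(v, w)).natAbs : ℤ)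
    have hva : ((c.col v s(v, w)).natAbs : ℤ) = a := by rw [habs h]
    rw [hva] at key hgw
    have hAv : A a v = σ s(v, w) * σ' s(v, w) * A a w := by
      have : A a v = A a v * (A a w * A a w) := by rw [hgw, mul_one]
      rw [this, ← mul_assoc, key, hfdef]
    rw [hcompat, hAv]
    have : σ s(v, w) * σ' s(v, w) * A a w * (-σ s(v, w) * c.col w s(v, w)) =
        -σ' s(v, w) * (A a w * c.col w s(v, w)) * (σ s(v, w) * σ s(v, w)) := by ring
    rw [this, hs2, mul_one]
  · -- Proper
    intro v w x hvw hvx hne heq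
    simp only [hcol'] at heq
    have habseq : (c.col v s(v, w)).natAbs = (c.col v s(v, x)).natAbs := by
      have := congrArg Int.natAbs heq
      simpa [hnatAbs] using this
    rw [habseq] at heq
    exact hc hvw hvx hne (mul_left_cancel₀ (hA1' _ _) heq)
  · -- ZeroFree
    intro v w h h0
    simp only [hcol'] at h0
    rcases mul_eq_zero.mp h0 with h' | h'
    · exact hA1' _ _ h'
    · exact hz h h'
  · -- CompletelyReversible
    intro a ha
    have hiff : ∀ (ε x b : ℤ), (ε = 1 ∨ ε = -1) →
        ((ε * x = b ∨ ε * x = -b) ↔ (x = b ∨ x = -b)) := by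
      rintro ε x b (rfl | rfl)
      · simp
      · constructor <;> rintro (h | h) <;> omega
    have : magGraph G col' a = magGraph G c.col a := by
      ext v w
      show (G.Adj v w ∧ _ ∧ _) ↔ (G.Adj v w ∧ _ ∧ _)
      constructor
      · rintro ⟨h1, h2, h3⟩
        exact ⟨h1, (hiff _ _ _ (hA1 _ v)).mp h2, (hiff _ _ _ (hA1 _ w)).mp h3⟩
      · rintro ⟨h1, h2, h3⟩
        exact ⟨h1, (hiff _ _ _ (hA1 _ v)).mpr h2, (hiff _ _ _ (hA1 _ w)).mpr h3⟩
    rw [this]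
    exact hrev a ha
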